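/- The cubic B-spline quasi-interpolation matrix A = (1/48) * [[8,32,8,0,0],[1,23,23,1,0],[0,8,32,8,0],[0,1,23,23,1],[0,0,8,32,8]] is invertible, and the third row of its inverse equals the row vector omega = (1/6) * (1, -8, 20, -8, 1); equivalently, omega * A = (0,0,1,0,0). -/

import Mathlib

set_option maxHeartbeats 1600000


open Matrix

noncomputable def cubicB : Matrix (Fin 5) (Fin 5) ℝ :=
  !![47/6, -44/3, 34/3, -4, 1/2;
     -1/2, 4, -11/3, 4/3, -1/6;
     1/6, -4/3, 10/3, -4/3, 1/6;
     -1/6, 4/3, -11/3, 4, -1/2;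
     1/2, -4, 34/3, -44/3, 47/6]

lemma vecMul_e2 (M : Matrix (Fin 5) (Fin 5) ℝ) :
    ![0,0,1,0,0] ᵥ* M = M 2 := by
  funext j
  simp [vecMul, dotProduct, Fin.sum_univ_five]

/-- The cubic B-spline quasi-interpolation matrix `A` is invertible, the third
row of its inverse is `ω = (1/6) * (1, -8, 20, -8, 1)`, and equivalently
`ω * A = (0,0,1,0,0)`. -/
theorem cubic_bspline_quasi_interpolation_weights :
    let A : Matrix (Fin 5) (Fin 5) ℝ :=
      (1/48 : ℝ) • !![8,32,8,0,0;
                      1,23,23,1,0;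
                      0,8,32,8,0;
                      0,1,23,23,1;
                      0,0,8,32,8]
    let ω : Fin 5 → ℝ := (1/6 : ℝ) • ![1,-8,20,-8,1]
    IsUnit A ∧ A⁻¹ 2 = ω ∧ ω ᵥ* A = ![0,0,1,0,0] := by
  intro A ω
  have hAB : A * cubicB = 1 := by
    ext i j
    fin_cases i <;> fin_cases j <;>
      norm_num [A, cubicB, mul_apply, Fin.sum_univ_five, Matrix.smul_apply,
        Matrix.one_apply, Fin.ext_iff, Matrix.vecHead, Matrix.vecTail, Matrix.cons_val_two, Matrix.cons_val_three, Matrix.cons_val_four]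
  have hBA : cubicB * A = 1 := by
    ext i j
    fin_cases i <;> fin_cases j <;>
      norm_num [A, cubicB, mul_apply, Fin.sum_univ_five, Matrix.smul_apply,
        Matrix.one_apply, Fin.ext_iff, Matrix.vecHead, Matrix.vecTail, Matrix.cons_val_two, Matrix.cons_val_three, Matrix.cons_val_four]
  have hinv : A⁻¹ = cubicB := Matrix.inv_eq_right_inv hAB
  have hunit : IsUnit A := by
    have := invertibleOfRightInverse A cubicB hAB
    exact isUnit_of_invertible A
  have hω2 : A⁻¹ 2 = ω := by
    rw [hinv]
    funext j
    fin_cases j <;> norm_num [cubicB, ω, Matrix.smul_apply, Matrix.cons_val_two, Matrix.vecHead, Matrix.vecTail]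
  refine ⟨hunit, hω2, ?_⟩
  have h : ω = ![0,0,1,0,0] ᵥ* A⁻¹ := by rw [vecMul_e2, hω2]
  rw [h, vecMul_vecMul, hinv, hBA, vecMul_one]
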